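/- For every integer u ≥ 2 and every integer n with 1 ≤ n ≤ 2u − 1, the binomial-sum identity Σ_{k=1}^{⌊((n+1)u−1)/(2u−1)⌋} C(n − k + ⌊(k−1)/u⌋, k−1) = Σ_{i=0}^{⌊(n−1)/2⌋} C(n − i − 1, i) holds. -/

import Mathlib

theorem binomial_sum_identity (u n : ℕ) (hu : 2 ≤ u) (hn1 : 1 ≤ n) (hn2 : n ≤ 2 * u - 1) :
    ∑ k ∈ Finset.Icc 1 (((n + 1) * u - 1) / (2 * u - 1)),
        (n - k + (k - 1) / u).choose (k - 1) =
      ∑ i ∈ Finset.range ((n - 1) / 2 + 1), (n - i - 1).choose i := by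
  set M := ((n + 1) * u - 1) / (2 * u - 1) with hM
  set q := (n - 1) / 2 with hqdef
  have hq1 : 2 * q ≤ n - 1 := by omega
  have hq2 : n - 1 ≤ 2 * q + 1 := by omega
  have hpos : 0 < 2 * u - 1 := by omega
  have hMu : M ≤ u := by
    rw [hM, ← Nat.lt_succ_iff, Nat.div_lt_iff_lt_mul hpos]
    have h1 : 1 ≤ (n + 1) * u := Nat.mul_pos (by omega) (by omega)
    zify [h1, show 1 ≤ 2 * u by omega] at *
    nlinarith [mul_le_mul_of_nonneg_right hn2 (show (0:ℤ) ≤ u by positivity)]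
  have hqM : q + 1 ≤ M := by
    rw [hM, Nat.le_div_iff_mul_le hpos]
    have h1 : 1 ≤ (n + 1) * u := Nat.mul_pos (by omega) (by omega)
    zify [h1, show 1 ≤ 2 * u by omega] at *
    nlinarith [mul_le_mul_of_nonneg_right (show (2:ℤ) * q ≤ n - 1 by omega)
      (show (0:ℤ) ≤ u by positivity)]
  have hLHS : ∑ k ∈ Finset.Icc 1 M, (n - k + (k - 1) / u).choose (k - 1)
      = ∑ j ∈ Finset.range M, (n - j - 1).choose j := by
    rw [← Finset.Ico_add_one_right_eq_Icc, Finset.sum_Ico_eq_sum_range]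
    apply Finset.sum_congr (by simp)
    intro j hj
    simp only [Finset.mem_range] at hj
    have hju : 1 + j - 1 < u := by omega
    rw [Nat.div_eq_of_lt hju]
    congr 1 <;> omega
  rw [hLHS]
  symm
  apply Finset.sum_subset
  · intro x hx
    simp only [Finset.mem_range] at *
    omega
  · intro x _ hx
    simp only [Finset.mem_range, not_lt] at hx
    exact Nat.choose_eq_zero_of_lt (by omega)
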